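/- Let a > b > 0, let C be a Hermitian positive definite complex n×n matrix, and let A be a complex n×n matrix. If there exists a Hermitian positive definite matrix H satisfying H − (1/(2a²) + 1/(2b²))·A*HA − (1/(4a²) − 1/(4b²))·(HA² + (A*)²H) = −C, then every eigenvalue μ of A satisfies (Re μ)²/a² + (Im μ)²/b² > 1. -/

import Mathlib

open Matrix
open scoped ComplexOrder

lemma exists_eigvec {n : ℕ} (A : Matrix (Fin n) (Fin n) ℂ) (μ : ℂ) (h : μ ∈ spectrum ℂ A) :
    ∃ v : Fin n → ℂ, v ≠ 0 ∧ A *ᵥ v = μ • v := by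
  rw [← AlgEquiv.spectrum_eq (Matrix.toLinAlgEquiv' (n := Fin n) (R := ℂ)),
    ← Module.End.hasEigenvalue_iff_mem_spectrum] at h
  obtain ⟨v, hv⟩ := h.exists_hasEigenvector
  refine ⟨v, hv.2, ?_⟩
  have := hv.apply_eq_smul
  rwa [Matrix.toLinAlgEquiv'_apply] at this

/-- Sufficiency direction of the exterior-ellipse criterion: if the elliptic
Lyapunov-type equation with right-hand side `-C` (with `C > 0`) has a Hermitian
positive definite solution `H`, then every eigenvalue of `A` lies in the open
exterior of the ellipse. -/
theorem spectrum_in_ellipse_exterior_of_lyapunov {n : ℕ} (a b : ℝ) (hba : b < a) (hb : 0 < b)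
    (C : Matrix (Fin n) (Fin n) ℂ) (hC : C.PosDef) (A : Matrix (Fin n) (Fin n) ℂ)
    (H : Matrix (Fin n) (Fin n) ℂ) (hH : H.PosDef)
    (heq : H - ((1 / (2 * a ^ 2) + 1 / (2 * b ^ 2) : ℝ) : ℂ) • (Aᴴ * H * A)
      - ((1 / (4 * a ^ 2) - 1 / (4 * b ^ 2) : ℝ) : ℂ) • (H * A ^ 2 + Aᴴ ^ 2 * H) = -C) :
    ∀ μ ∈ spectrum ℂ A, 1 < μ.re ^ 2 / a ^ 2 + μ.im ^ 2 / b ^ 2 := by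
  intro μ hμ
  obtain ⟨v, hv, h1⟩ := exists_eigvec A μ hμ
  have ha : 0 < a := hb.trans hba
  set c1 : ℂ := ((1 / (2 * a ^ 2) + 1 / (2 * b ^ 2) : ℝ) : ℂ) with hc1
  set c2 : ℂ := ((1 / (4 * a ^ 2) - 1 / (4 * b ^ 2) : ℝ) : ℂ) with hc2
  set q : ℂ := star v ⬝ᵥ (H *ᵥ v) with hqdef
  set cq : ℂ := star v ⬝ᵥ (C *ᵥ v) with hcqdef
  have hq : 0 < q := hH.dotProduct_mulVec_pos hv
  have hcq : 0 < cq := hC.dotProduct_mulVec_pos hv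
  -- eigen-facts
  have h2 : A ^ 2 *ᵥ v = (μ ^ 2) • v := by
    rw [pow_two, ← mulVec_mulVec, h1, mulVec_smul, h1, smul_smul, ← pow_two]
  have hA : star v ᵥ* Aᴴ = (starRingEnd ℂ) μ • star v := by
    rw [← star_mulVec, h1, star_smul]; rfl
  have hA2 : star v ᵥ* (Aᴴ ^ 2) = (starRingEnd ℂ) (μ ^ 2) • star v := by
    rw [← conjTranspose_pow, ← star_mulVec, h2, star_smul]; rfl
  -- quadratic forms of the three terms
  have e1 : star v ⬝ᵥ ((Aᴴ * H * A) *ᵥ v) = (starRingEnd ℂ) μ * μ * q := by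
    rw [← mulVec_mulVec, h1, mulVec_smul, dotProduct_smul, ← mulVec_mulVec,
      dotProduct_mulVec, hA, smul_dotProduct, smul_eq_mul, smul_eq_mul, hqdef]
    ring
  have e2 : star v ⬝ᵥ ((H * A ^ 2) *ᵥ v) = μ ^ 2 * q := by
    rw [← mulVec_mulVec, h2, mulVec_smul, dotProduct_smul, smul_eq_mul, hqdef]
  have e3 : star v ⬝ᵥ ((Aᴴ ^ 2 * H) *ᵥ v) = (starRingEnd ℂ) (μ ^ 2) * q := by
    rw [← mulVec_mulVec, dotProduct_mulVec, hA2, smul_dotProduct, smul_eq_mul, hqdef,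
      dotProduct_mulVec]
  have key : q - c1 * ((starRingEnd ℂ) μ * μ * q)
      - c2 * (μ ^ 2 * q + (starRingEnd ℂ) (μ ^ 2) * q) = -cq := by
    have h := congrArg (fun M => star v ⬝ᵥ (M *ᵥ v)) heq
    simp only [sub_mulVec, add_mulVec, smul_mulVec, dotProduct_sub, dotProduct_add,
      dotProduct_smul, neg_mulVec, dotProduct_neg, smul_eq_mul] at h
    rw [e1, e2, e3] at h
    linear_combination h
  -- take real parts
  have hre := congrArg Complex.re key
  have hqim : q.im = 0 := ((Complex.lt_def.mp hq).2).symm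
  have hcqre : 0 < cq.re := (Complex.lt_def.mp hcq).1
  set x := μ.re
  set y := μ.im
  have hmul : ((starRingEnd ℂ) μ * μ).re = x ^ 2 + y ^ 2 := by
    simp [Complex.mul_re, Complex.conj_re, Complex.conj_im]; ring
  have hre' : (1 - (1 / (2 * a ^ 2) + 1 / (2 * b ^ 2)) * (x ^ 2 + y ^ 2)
      - (1 / (4 * a ^ 2) - 1 / (4 * b ^ 2)) * (2 * (x ^ 2 - y ^ 2))) * q.re = -cq.re := by
    simp only [Complex.sub_re, Complex.add_re, Complex.neg_re, Complex.mul_re,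
      Complex.mul_im, hc1, hc2, Complex.ofReal_re, Complex.ofReal_im, hqim,
      Complex.conj_re, Complex.conj_im, Complex.normSq_apply, pow_two, zero_mul,
      mul_zero, sub_zero, add_zero] at hre ⊢
    linear_combination hre
  have hcoef : (1 - (x ^ 2 / a ^ 2 + y ^ 2 / b ^ 2)) * q.re = -cq.re := by
    rw [← hre']
    have ha2 : a ^ 2 ≠ 0 := by positivity
    have hb2 : b ^ 2 ≠ 0 := by positivity
    field_simp
    ring
  have hqre : 0 < q.re := (Complex.lt_def.mp hq).1
  nlinarith [hcoef, hqre, hcqre]
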